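/- Let $\{\mu_l\}_{l\ge1}$ satisfy $\mu_l \le c\, l^{-2\nu/d-1}$ with $c>0$, $\nu > d/2$, $d>0$, and let $a > 0$. Define $\gamma(a) = \sum_{l=1}^{\infty} \frac{\mu_l}{\mu_l + a}$. Then there exists a constant $C > 0$ depending only on $c, \nu, d$ such that for all sufficiently small $a > 0$, $\gamma(a) \le C\, a^{-d/(2\nu+d)}$. -/

import Mathlib

/-- Bernoulli-type step estimate: `q * (m+1)^(-(q+1)) ≤ m^(-q) - (m+1)^(-q)`. -/
lemma bern_step {q : ℝ} (hq : 1 ≤ q) {x : ℝ} (hx : 1 ≤ x) :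
    q * (x + 1) ^ (-(q + 1)) ≤ x ^ (-q) - (x + 1) ^ (-q) := by
  have hx0 : (0:ℝ) < x := lt_of_lt_of_le one_pos hx
  have hx1 : (0:ℝ) < x + 1 := by linarith
  have hs : (-1 : ℝ) ≤ 1 / x := le_trans (by norm_num) (by positivity : (0:ℝ) ≤ 1 / x)
  have hb : 1 + q * (1 / x) ≤ (1 + 1 / x) ^ q := one_add_mul_self_le_rpow_one_add hs hq
  have h1 : (1 : ℝ) + 1 / x = (x + 1) / x := by field_simp
  have h2 : ((x + 1) / x) ^ q = (x + 1) ^ q / x ^ q := Real.div_rpow hx1.le hx0.le q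
  set A := x ^ q with hA
  set B := (x + 1) ^ q with hB
  have hApos : 0 < A := Real.rpow_pos_of_pos hx0 q
  have hBpos : 0 < B := Real.rpow_pos_of_pos hx1 q
  have hb' : (1 + q * (1 / x)) * A ≤ B := by
    rw [h1, h2] at hb
    rw [← le_div_iff₀ hApos]
    exact hb
  have key : A * x + q * A ≤ B * x := by
    have : (1 + q * (1 / x)) * A * x ≤ B * x :=
      mul_le_mul_of_nonneg_right hb' hx0.le
    calc A * x + q * A = (1 + q * (1 / x)) * A * x := by field_simp
    _ ≤ B * x := this
  have hAB : A ≤ B := by nlinarith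
  have e1 : x ^ (-q) = A⁻¹ := Real.rpow_neg hx0.le q
  have e2 : (x + 1) ^ (-q) = B⁻¹ := Real.rpow_neg hx1.le q
  have e3 : (x + 1) ^ (-(q + 1)) = (B * (x + 1))⁻¹ := by
    rw [Real.rpow_neg hx1.le, Real.rpow_add_one hx1.ne']
  rw [e1, e2, e3]
  rw [inv_eq_one_div, inv_eq_one_div, inv_eq_one_div,
    div_sub_div _ _ hApos.ne' hBpos.ne', mul_one_div, div_le_div_iff₀ (by positivity) (by positivity)]
  nlinarith [mul_nonneg (sub_nonneg.mpr hAB) hBpos.le, mul_nonneg (sub_nonneg.mpr hAB) (mul_pos hBpos hx0).le]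

/-- Tail bound: `∑_{i} (i+N+1)^(-(q+1)) ≤ N^(-q) / q` for `N ≥ 1`, `q ≥ 1`. -/
lemma tail_bound {q : ℝ} (hq : 1 ≤ q) {N : ℕ} (hN : 1 ≤ N) :
    ∑' i : ℕ, ((i + N + 1 : ℕ) : ℝ) ^ (-(q + 1)) ≤ ((N : ℝ)) ^ (-q) / q := by
  have hq0 : (0:ℝ) < q := lt_of_lt_of_le one_pos hq
  apply Real.tsum_le_of_sum_range_le
  · intro n; positivity
  · intro n
    have hstep : ∀ i : ℕ, ((i + N + 1 : ℕ) : ℝ) ^ (-(q + 1)) ≤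
        (((N + i : ℕ) : ℝ) ^ (-q) - ((N + (i+1) : ℕ) : ℝ) ^ (-q)) / q := by
      intro i
      have hx : (1:ℝ) ≤ ((N + i : ℕ) : ℝ) := by
        have : 1 ≤ N + i := le_add_right hN
        exact_mod_cast this
      have := bern_step hq hx
      rw [le_div_iff₀ hq0]
      have hcast1 : ((i + N + 1 : ℕ) : ℝ) = ((N + i : ℕ) : ℝ) + 1 := by push_cast; ring
      have hcast2 : ((N + (i+1) : ℕ) : ℝ) = ((N + i : ℕ) : ℝ) + 1 := by push_cast; ring
      rw [hcast1, hcast2, mul_comm]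
      exact this
    calc ∑ i ∈ Finset.range n, ((i + N + 1 : ℕ) : ℝ) ^ (-(q + 1))
        ≤ ∑ i ∈ Finset.range n, (((N + i : ℕ) : ℝ) ^ (-q) - ((N + (i+1) : ℕ) : ℝ) ^ (-q)) / q :=
          Finset.sum_le_sum fun i _ => hstep i
      _ = (∑ i ∈ Finset.range n, (((N + i : ℕ) : ℝ) ^ (-q) - ((N + (i+1) : ℕ) : ℝ) ^ (-q))) / q :=
          (Finset.sum_div _ _ _).symm
      _ = (((N + 0 : ℕ) : ℝ) ^ (-q) - ((N + n : ℕ) : ℝ) ^ (-q)) / q := by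
          rw [Finset.sum_range_sub' (fun i => ((N + i : ℕ) : ℝ) ^ (-q)) n]
      _ ≤ ((N : ℝ)) ^ (-q) / q := by
          have h1 : (0:ℝ) ≤ ((N + n : ℕ) : ℝ) ^ (-q) := by positivity
          have h2 : ((N + 0 : ℕ) : ℝ) ^ (-q) - ((N + n : ℕ) : ℝ) ^ (-q) ≤ ((N:ℝ)) ^ (-q) := by
            simp only [Nat.add_zero]; linarith
          gcongr

set_option maxHeartbeats 1000000 in
/-- Effective dimensionality bound for polynomially decaying eigenvalues:
`γ(a) = ∑ μ_l/(μ_l + a) ≤ C a^(-d/(2ν+d))` for all sufficiently small `a > 0`. -/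
theorem stmt_2 (μ : ℕ → ℝ) (c ν d : ℝ)
    (hc : 0 < c) (hd : 0 < d) (hν : d / 2 < ν)
    (hnonneg : ∀ l : ℕ, 1 ≤ l → 0 ≤ μ l)
    (hbound : ∀ l : ℕ, 1 ≤ l → μ l ≤ c * (l : ℝ) ^ (-(2 * ν / d + 1))) :
    ∃ C > (0 : ℝ), ∃ a0 > (0 : ℝ), ∀ a : ℝ, 0 < a → a ≤ a0 →
      ∑' l : ℕ, μ (l + 1) / (μ (l + 1) + a) ≤ C * a ^ (-(d / (2 * ν + d))) := by
  set q : ℝ := 2 * ν / d with hqdef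
  set p : ℝ := q + 1 with hpdef
  have hq1 : 1 < q := by
    rw [hqdef, lt_div_iff₀ hd]; linarith
  have hq0 : (0:ℝ) < q := by linarith
  have hp0 : (0:ℝ) < p := by rw [hpdef]; linarith
  have hp1 : (1:ℝ) < p := by rw [hpdef]; linarith
  -- exponent identity
  have hE : d / (2 * ν + d) = 1 / p := by
    rw [hpdef, hqdef]
    field_simp
  refine ⟨(2 + 1 / q) * c ^ (1 / p), by positivity, c, hc, fun a ha hac => ?_⟩
  have hca1 : (1:ℝ) ≤ c / a := (one_le_div ha).mpr hac
  have hca0 : (0:ℝ) < c / a := by positivity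
  set B : ℝ := (c / a) ^ (1 / p) with hBdef
  have hB1 : (1:ℝ) ≤ B := Real.one_le_rpow hca1 (by positivity)
  have hB0 : (0:ℝ) < B := lt_of_lt_of_le one_pos hB1
  set N : ℕ := ⌈B⌉₊ with hNdef
  have hN1 : 1 ≤ N := Nat.one_le_ceil_iff.mpr hB0
  have hNB : B ≤ (N : ℝ) := Nat.le_ceil B
  have hNB2 : (N : ℝ) ≤ 2 * B := by
    have h := Nat.ceil_lt_add_one (le_of_lt hB0)
    have : (N:ℝ) < B + 1 := h
    linarith
  -- summability
  have hsum_pow : Summable (fun l : ℕ => ((l + 1 : ℕ) : ℝ) ^ (-p)) := by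
    have h0 : Summable (fun n : ℕ => (n : ℝ) ^ (-p)) :=
      Real.summable_nat_rpow.mpr (by linarith)
    exact (summable_nat_add_iff 1).mpr h0
  have hf_nonneg : ∀ l : ℕ, 0 ≤ μ (l + 1) / (μ (l + 1) + a) := by
    intro l
    have hμ : 0 ≤ μ (l + 1) := hnonneg (l + 1) (Nat.le_add_left 1 l)
    positivity
  have hf_le : ∀ l : ℕ, μ (l + 1) / (μ (l + 1) + a) ≤ (c / a) * ((l + 1 : ℕ) : ℝ) ^ (-p) := by
    intro l
    have h1l : 1 ≤ l + 1 := Nat.le_add_left 1 l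
    have hμ : 0 ≤ μ (l + 1) := hnonneg (l + 1) h1l
    have hμa : 0 < μ (l + 1) + a := by linarith
    have hb := hbound (l + 1) h1l
    calc μ (l + 1) / (μ (l + 1) + a) ≤ μ (l + 1) / a := by
          gcongr
          linarith
      _ ≤ (c * ((l + 1 : ℕ) : ℝ) ^ (-p)) / a := by
          gcongr
      _ = (c / a) * ((l + 1 : ℕ) : ℝ) ^ (-p) := by ring
  have hf_summable : Summable (fun l : ℕ => μ (l + 1) / (μ (l + 1) + a)) :=
    Summable.of_nonneg_of_le hf_nonneg hf_le (hsum_pow.mul_left (c / a))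
  -- split
  have hsplit := hf_summable.sum_add_tsum_nat_add N
  rw [← hsplit]
  -- head bound
  have hhead : ∑ i ∈ Finset.range N, μ (i + 1) / (μ (i + 1) + a) ≤ (N : ℝ) := by
    calc ∑ i ∈ Finset.range N, μ (i + 1) / (μ (i + 1) + a)
        ≤ ∑ i ∈ Finset.range N, 1 := by
          apply Finset.sum_le_sum
          intro i _
          have h1l : 1 ≤ i + 1 := Nat.le_add_left 1 i
          have hμ : 0 ≤ μ (i + 1) := hnonneg (i + 1) h1l
          rw [div_le_one (by linarith)]
          linarith
      _ = (N : ℝ) := by simp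
  -- tail bound
  have htail_sum : Summable (fun i : ℕ => (c / a) * ((i + N + 1 : ℕ) : ℝ) ^ (-p)) := by
    have : Summable (fun i : ℕ => ((i + N + 1 : ℕ) : ℝ) ^ (-p)) := by
      have h0 : Summable (fun n : ℕ => (n : ℝ) ^ (-p)) :=
        Real.summable_nat_rpow.mpr (by linarith)
      have h1 : Summable (fun n : ℕ => (((n + (N + 1)) : ℕ) : ℝ) ^ (-p)) :=
        (summable_nat_add_iff (N + 1)).mpr h0
      exact h1.congr (fun b => by rw [Nat.add_assoc])
    exact this.mul_left _
  have htail : ∑' i : ℕ, μ (i + N + 1) / (μ (i + N + 1) + a) ≤ (c / a) * (((N : ℝ)) ^ (-q) / q) := by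
    calc ∑' i : ℕ, μ (i + N + 1) / (μ (i + N + 1) + a)
        ≤ ∑' i : ℕ, (c / a) * ((i + N + 1 : ℕ) : ℝ) ^ (-p) := by
          apply Summable.tsum_le_tsum ?_ ?_ htail_sum
          · intro i
            have := hf_le (i + N)
            simpa using this
          · exact (summable_nat_add_iff N).mpr hf_summable
      _ = (c / a) * ∑' i : ℕ, ((i + N + 1 : ℕ) : ℝ) ^ (-p) := tsum_mul_left
      _ ≤ (c / a) * (((N : ℝ)) ^ (-q) / q) := by
          apply mul_le_mul_of_nonneg_left ?_ hca0.le
          rw [hpdef]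
          exact tail_bound hq1.le hN1
  -- combine
  have hcomb : ∑ i ∈ Finset.range N, μ (i + 1) / (μ (i + 1) + a) +
      ∑' i : ℕ, μ (i + N + 1) / (μ (i + N + 1) + a) ≤ (N : ℝ) + (c / a) * (((N : ℝ)) ^ (-q) / q) :=
    add_le_add hhead htail
  -- N^(-q) ≤ B^(-q)
  have hNq : ((N : ℝ)) ^ (-q) ≤ B ^ (-q) :=
    Real.rpow_le_rpow_of_nonpos hB0 hNB (by linarith)
  -- (c/a) * B^(-q) = B
  have hBq : (c / a) * B ^ (-q) = B := by
    have hexp : 1 + (1 / p) * (-q) = 1 / p := by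
      rw [hpdef]; field_simp; ring
    calc (c / a) * B ^ (-q)
        = (c / a) ^ (1:ℝ) * (c / a) ^ ((1 / p) * (-q)) := by
          rw [Real.rpow_one, hBdef, ← Real.rpow_mul hca0.le]
      _ = (c / a) ^ (1 + (1 / p) * (-q)) := (Real.rpow_add hca0 _ _).symm
      _ = (c / a) ^ (1 / p) := by rw [hexp]
      _ = B := hBdef.symm
  -- B in terms of a
  have hBval : B = c ^ (1 / p) * a ^ (-(d / (2 * ν + d))) := by
    rw [hE, hBdef, Real.div_rpow hc.le ha.le, Real.rpow_neg ha.le, div_eq_mul_inv]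
  have ht1 : (c / a) * (((N : ℝ)) ^ (-q) / q) ≤ B / q := by
    calc (c / a) * (((N : ℝ)) ^ (-q) / q) = ((c / a) * ((N : ℝ)) ^ (-q)) / q := by ring
      _ ≤ ((c / a) * B ^ (-q)) / q := by
          gcongr
      _ = B / q := by rw [hBq]
  calc ∑ i ∈ Finset.range N, μ (i + 1) / (μ (i + 1) + a) +
        ∑' i : ℕ, μ (i + N + 1) / (μ (i + N + 1) + a)
      ≤ (N : ℝ) + (c / a) * (((N : ℝ)) ^ (-q) / q) := hcomb
    _ ≤ 2 * B + B / q := add_le_add hNB2 ht1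
    _ = (2 + 1 / q) * B := by field_simp
    _ = (2 + 1 / q) * c ^ (1 / p) * a ^ (-(d / (2 * ν + d))) := by rw [hBval]; ring
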